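/- Let k be a field and let B = k[x_1, …, x_n] be the polynomial ring in n variables over k. Let A be a retract of B over k, i.e., there exist k-algebra homomorphisms ι : A → B and π : B → A with π ∘ ι = id_A. Then A is an integral domain that is finitely generated as a k-algebra, A is a unique factorization domain, and the unit group of A equals the image of k^*, i.e., every unit of A lies in (the image of) k. -/

import Mathlib

/-- Units of a multivariate polynomial ring (finitely many variables) over a field are
constants. -/
lemma mv_isUnit_exists_C {k : Type*} [Field k] :
    ∀ (n : ℕ) (p : MvPolynomial (Fin n) k), IsUnit p → ∃ c : k, MvPolynomial.C c = p := by
  intro n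
  induction n with
  | zero =>
    intro p hp
    refine ⟨(MvPolynomial.isEmptyAlgEquiv k (Fin 0)) p, ?_⟩
    have h3 : (MvPolynomial.isEmptyAlgEquiv k (Fin 0)).symm
        ((MvPolynomial.isEmptyAlgEquiv k (Fin 0)) p)
        = algebraMap k _ ((MvPolynomial.isEmptyAlgEquiv k (Fin 0)) p) := by
      simpa using ((MvPolynomial.isEmptyAlgEquiv k (Fin 0)).symm.commutes
        ((MvPolynomial.isEmptyAlgEquiv k (Fin 0)) p))
    conv_rhs => rw [← (MvPolynomial.isEmptyAlgEquiv k (Fin 0)).symm_apply_apply p, h3]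
    rw [MvPolynomial.algebraMap_eq]
  | succ m ih =>
    intro p hp
    set e := MvPolynomial.finSuccEquiv k m with he
    have hu : IsUnit (e p) := hp.map e
    obtain ⟨r, hr, hrp⟩ := Polynomial.isUnit_iff.mp hu
    obtain ⟨c, hc⟩ := ih r hr
    refine ⟨c, ?_⟩
    have h1 : e p = algebraMap k _ c := by
      rw [← hrp, ← hc]
      simp [MvPolynomial.algebraMap_eq, Polynomial.algebraMap_apply]
    have h2 : p = e.symm (algebraMap k _ c) := by
      rw [← h1, AlgEquiv.symm_apply_apply]
    rw [h2, AlgEquiv.commutes, MvPolynomial.algebraMap_eq]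

/-- If `A` is a retract of the polynomial ring `k[x₁, …, xₙ]` over a field `k`, then `A`
is an integral domain, finitely generated as a `k`-algebra, a UFD, and its units all come
from `k`. -/
theorem retract_of_polynomialRing_properties {k : Type*} [Field k] (n : ℕ)
    {A : Type*} [CommRing A] [Algebra k A]
    (ι : A →ₐ[k] MvPolynomial (Fin n) k) (π : MvPolynomial (Fin n) k →ₐ[k] A)
    (h : π.comp ι = AlgHom.id k A) :
    ∃ _ : IsDomain A, Algebra.FiniteType k A ∧ UniqueFactorizationMonoid A ∧
      ∀ a : A, IsUnit a → ∃ c : k, algebraMap k A c = a := by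
  have hpi : ∀ a : A, π (ι a) = a := fun a => by
    have := AlgHom.congr_fun h a
    simpa using this
  have hinj : Function.Injective ι := fun x y hxy => by
    have := congrArg π hxy
    rwa [hpi, hpi] at this
  have hsurj : Function.Surjective π := fun a => ⟨ι a, hpi a⟩
  haveI hdom : IsDomain A := Function.Injective.isDomain ι.toRingHom hinj
  haveI hnoeth : IsNoetherianRing A :=
    isNoetherianRing_of_surjective _ _ π.toRingHom hsurj
  have hprime : ∀ a : A, Irreducible a → Prime a := by
    intro a ha
    refine ⟨ha.ne_zero, ha.not_isUnit, fun x y hxy => ?_⟩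
    have hB : ι a ∣ ι x * ι y := by
      obtain ⟨t, ht⟩ := hxy
      exact ⟨ι t, by rw [← map_mul, ht, map_mul]⟩
    obtain ⟨d₁, d₂, hd₁, hd₂, hdd⟩ := exists_dvd_and_dvd_of_dvd_mul hB
    have haeq : a = π d₁ * π d₂ := by
      rw [← map_mul, ← hdd, hpi]
    have hdx : π d₁ ∣ x := by
      obtain ⟨t, ht⟩ := hd₁
      exact ⟨π t, by rw [← map_mul, ← ht, hpi]⟩
    have hdy : π d₂ ∣ y := by
      obtain ⟨t, ht⟩ := hd₂
      exact ⟨π t, by rw [← map_mul, ← ht, hpi]⟩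
    rcases ha.isUnit_or_isUnit haeq with hu | hu
    · right
      obtain ⟨u, hu⟩ := hu
      refine dvd_trans ⟨((↑u⁻¹ : Aˣ) : A), ?_⟩ hdy
      rw [haeq, ← hu, mul_comm (↑u : A) (π d₂), mul_assoc, Units.mul_inv, mul_one]
    · left
      obtain ⟨u, hu⟩ := hu
      refine dvd_trans ⟨((↑u⁻¹ : Aˣ) : A), ?_⟩ hdx
      rw [haeq, ← hu, mul_assoc, Units.mul_inv, mul_one]
  haveI hufd : UniqueFactorizationMonoid A :=
    { (inferInstance : WfDvdMonoid A) with
      irreducible_iff_prime := fun {a} => ⟨hprime a, Prime.irreducible⟩ }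
  refine ⟨hdom, ?_, hufd, ?_⟩
  · exact Algebra.FiniteType.of_surjective π hsurj
  · intro a ha
    obtain ⟨c, hc⟩ := mv_isUnit_exists_C n (ι a) (ha.map ι)
    refine ⟨c, ?_⟩
    have : π (MvPolynomial.C c) = algebraMap k A c := by
      rw [← MvPolynomial.algebraMap_eq, AlgHom.commutes]
    rw [← this, hc, hpi]
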